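/- Chatterjee–Diaconis style importance sampling L1 error bound (finite-space version): let p, q be probability mass functions on a finite set X with p ≪ q, φ : X → [0,1], r* = E_p[φ], and let r be the average of n = ⌈exp(L + c)⌉ i.i.d. importance-sampled terms φ(Xᵢ)p(Xᵢ)/q(Xᵢ) with Xᵢ ~ q, where L = D(p‖q) and c ≥ 0. Then E|r − r*| ≤ √(E_p[φ²]) · ( e^{−c/4} + 2·√( P_p( log(p(X)/q(X)) > L + c/2 ) ) ). -/

import Mathlib

open MeasureTheory ProbabilityTheory Real

private lemma abs_le_sum_abs' {X : Type*} [Fintype X] (g : X → ℝ) (y : X) :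
    |g y| ≤ ∑ x, |g x| :=
  Finset.single_le_sum (fun i _ => abs_nonneg (g i)) (Finset.mem_univ y)

private lemma integrable_of_bounded' {Ω : Type*} [MeasurableSpace Ω] {μ : Measure Ω}
    [IsFiniteMeasure μ] {G : Ω → ℝ} (hG : AEStronglyMeasurable G μ) (C : ℝ)
    (hC : ∀ ω, |G ω| ≤ C) : Integrable G μ :=
  (integrable_const C).mono' hG (Filter.Eventually.of_forall (by simpa using hC))

private lemma integral_comp_law' {X : Type*} [Fintype X] [MeasurableSpace X]
    [MeasurableSingletonClass X] {Ω : Type*} [MeasurableSpace Ω] (μ : Measure Ω)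
    [IsProbabilityMeasure μ] {T : Ω → X} (hT : Measurable T) {q : X → ℝ}
    (hq0 : ∀ x, 0 ≤ q x) (hlaw : ∀ x, μ {ω | T ω = x} = ENNReal.ofReal (q x))
    (g : X → ℝ) : ∫ ω, g (T ω) ∂μ = ∑ x, q x * g x := by
  have hmap : IsProbabilityMeasure (μ.map T) := Measure.isProbabilityMeasure_map hT.aemeasurable
  have hint : Integrable g (μ.map T) := .of_finite
  rw [← integral_map hT.aemeasurable (measurable_of_countable g).aestronglyMeasurable,
    integral_fintype hint]
  refine Finset.sum_congr rfl fun x _ => ?_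
  rw [measureReal_def, Measure.map_apply hT (measurableSet_singleton x)]
  have hpre : T ⁻¹' {x} = {ω | T ω = x} := rfl
  rw [hpre, hlaw x, smul_eq_mul, ENNReal.toReal_ofReal (hq0 x)]

private lemma integral_abs_le_sqrt' {Ω : Type*} [MeasurableSpace Ω] {μ : Measure Ω}
    [IsProbabilityMeasure μ] {W : Ω → ℝ} (hW : Integrable W μ)
    (hW2 : Integrable (fun ω => W ω ^ 2) μ) :
    ∫ ω, |W ω| ∂μ ≤ Real.sqrt (∫ ω, W ω ^ 2 ∂μ) := by
  set I := ∫ ω, W ω ^ 2 ∂μ with hI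
  have hI0 : 0 ≤ I := integral_nonneg (fun ω => sq_nonneg _)
  set t := Real.sqrt I with ht
  have ht0 : 0 ≤ t := Real.sqrt_nonneg _
  have htsq : t ^ 2 = I := Real.sq_sqrt hI0
  rcases eq_or_lt_of_le ht0 with h0 | htpos
  · have hI0' : I = 0 := by rw [← htsq, ← h0]; ring
    have hae : (fun ω => W ω ^ 2) =ᵐ[μ] 0 :=
      (integral_eq_zero_iff_of_nonneg (fun ω => sq_nonneg _) hW2).mp hI0'
    have habs : ∫ ω, |W ω| ∂μ = 0 := by
      rw [integral_eq_zero_iff_of_nonneg (fun ω => abs_nonneg _) hW.abs]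
      filter_upwards [hae] with ω hω
      have hsq : W ω ^ 2 = 0 := hω
      have : W ω = 0 := by nlinarith [sq_nonneg (W ω)]
      simp [this]
    rw [habs]; exact ht0
  · have hpt : ∀ ω, |W ω| ≤ t / 2 + W ω ^ 2 / (2 * t) := by
      intro ω
      have h2 : t / 2 + W ω ^ 2 / (2 * t) = (t ^ 2 + W ω ^ 2) / (2 * t) := by
        field_simp
      rw [h2, le_div_iff₀ (by positivity)]
      nlinarith [sq_nonneg (|W ω| - t), sq_abs (W ω)]
    calc ∫ ω, |W ω| ∂μ ≤ ∫ ω, (t / 2 + W ω ^ 2 / (2 * t)) ∂μ :=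
          integral_mono hW.abs ((integrable_const (t / 2)).add (hW2.div_const (2 * t))) hpt
      _ = t / 2 + I / (2 * t) := by
          rw [integral_add (integrable_const _) (hW2.div_const _), integral_const,
            integral_div]
          simp
          rfl
      _ = t := by rw [← htsq]; field_simp; ring

/-- Chatterjee–Diaconis style importance sampling L1 error bound (finite-space version). -/
theorem chatterjee_diaconis_l1_bound {X : Type*} [Fintype X] [MeasurableSpace X]
    [MeasurableSingletonClass X]
    {Ω : Type*} [MeasurableSpace Ω] (μ : Measure Ω) [IsProbabilityMeasure μ]
    (p q : X → ℝ) (φ : X → ℝ) (c : ℝ) (n : ℕ) (hn0 : 0 < n)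
    (hp0 : ∀ x, 0 ≤ p x) (hq0 : ∀ x, 0 ≤ q x)
    (hp1 : ∑ x, p x = 1) (hq1 : ∑ x, q x = 1)
    (hsupp : ∀ x, 0 < p x → 0 < q x)
    (hφ : ∀ x, φ x ∈ Set.Icc (0 : ℝ) 1)
    (hc : 0 ≤ c)
    (L : ℝ) (hL : L = ∑ x, (if p x = 0 then 0 else p x * Real.log (p x / q x)))
    (hn : Real.exp (L + c) ≤ n)
    (Xs : Fin n → Ω → X)
    (hmeas : ∀ i, Measurable (Xs i))
    (hindep : iIndepFun Xs μ)
    (hlaw : ∀ i x, μ {ω | Xs i ω = x} = ENNReal.ofReal (q x)) :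
    ∫ ω, |(1 / (n : ℝ)) * ∑ i, φ (Xs i ω) * p (Xs i ω) / q (Xs i ω)
        - ∑ x, φ x * p x| ∂μ
      ≤ Real.sqrt (∑ x, φ x ^ 2 * p x) *
        (Real.exp (-c / 4) +
          2 * Real.sqrt (∑ x, (if Real.log (p x / q x) > L + c / 2 then p x else 0))) := by
  classical
  have hnpos : (0 : ℝ) < (n : ℝ) := by exact_mod_cast hn0
  set S2 : ℝ := ∑ x, φ x ^ 2 * p x with hS2def
  set Tt : ℝ := ∑ x, (if Real.log (p x / q x) > L + c / 2 then p x else 0) with hTdef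
  set rstar : ℝ := ∑ x, φ x * p x with hrstardef
  set f : X → ℝ := fun x => φ x * p x / q x with hfdef
  set h : X → ℝ := fun x => if Real.log (p x / q x) > L + c / 2 then 0 else f x with hhdef
  set T1 : ℝ := ∑ x, (if Real.log (p x / q x) > L + c / 2 then φ x * p x else 0) with hT1def
  set m1 : ℝ := ∑ x, q x * h x with hm1def
  -- x-side basic facts
  have hS2_0 : 0 ≤ S2 :=
    Finset.sum_nonneg fun x _ => mul_nonneg (sq_nonneg _) (hp0 x)
  have hT1_0 : 0 ≤ T1 := Finset.sum_nonneg fun x _ => by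
    split
    · exact mul_nonneg (hφ x).1 (hp0 x)
    · exact le_refl 0
  have hq_zero : ∀ x, q x = 0 → p x = 0 := by
    intro x hx
    by_contra hpx
    have hlt := hsupp x (lt_of_le_of_ne (hp0 x) (Ne.symm hpx))
    rw [hx] at hlt; exact lt_irrefl 0 hlt
  have hf0 : ∀ x, 0 ≤ f x := fun x =>
    div_nonneg (mul_nonneg (hφ x).1 (hp0 x)) (hq0 x)
  have hh0 : ∀ x, 0 ≤ h x := by
    intro x; simp only [hhdef]; split
    · exact le_refl 0
    · exact hf0 x
  have hhf : ∀ x, h x ≤ f x := by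
    intro x; simp only [hhdef]; split
    · exact hf0 x
    · exact le_refl _
  have hqf : ∀ x, q x * f x = φ x * p x := by
    intro x
    rcases eq_or_lt_of_le (hq0 x) with hq | hq
    · have hp := hq_zero x hq.symm
      simp only [hfdef]; rw [← hq, hp]; ring_nf
    · simp only [hfdef]; field_simp
  have hqfh : ∀ x, q x * (f x - h x) =
      (if Real.log (p x / q x) > L + c / 2 then φ x * p x else 0) := by
    intro x
    by_cases hA : Real.log (p x / q x) > L + c / 2
    · rw [if_pos hA]
      have : h x = 0 := by simp [hhdef, hA]
      rw [this, sub_zero, hqf]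
    · rw [if_neg hA]
      have : h x = f x := by simp [hhdef, hA]
      rw [this, sub_self, mul_zero]
  have hsplit : rstar = m1 + T1 := by
    rw [hrstardef, hm1def, hT1def, ← Finset.sum_add_distrib]
    refine Finset.sum_congr rfl fun x _ => ?_
    have := hqfh x
    have h2 := hqf x
    by_cases hA : Real.log (p x / q x) > L + c / 2
    · rw [if_pos hA] at this ⊢
      linarith [this, h2]
    · rw [if_neg hA] at this ⊢
      linarith [this, h2]
  have hT1M : T1 ≤ Real.sqrt S2 * Real.sqrt Tt := by
    have hCS := Finset.sum_mul_sq_le_sq_mul_sq Finset.univ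
      (fun x => if Real.log (p x / q x) > L + c / 2 then φ x * Real.sqrt (p x) else 0)
      (fun x => if Real.log (p x / q x) > L + c / 2 then Real.sqrt (p x) else 0)
    have hfg : (∑ x, (if Real.log (p x / q x) > L + c / 2 then φ x * Real.sqrt (p x) else 0)
        * (if Real.log (p x / q x) > L + c / 2 then Real.sqrt (p x) else 0)) = T1 := by
      rw [hT1def]
      refine Finset.sum_congr rfl fun x _ => ?_
      by_cases hA : Real.log (p x / q x) > L + c / 2
      · rw [if_pos hA, if_pos hA, if_pos hA, mul_assoc, Real.mul_self_sqrt (hp0 x)]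
      · rw [if_neg hA, if_neg hA, if_neg hA, mul_zero]
    have hf2 : (∑ x, (if Real.log (p x / q x) > L + c / 2 then φ x * Real.sqrt (p x) else 0) ^ 2)
        ≤ S2 := by
      rw [hS2def]
      refine Finset.sum_le_sum fun x _ => ?_
      by_cases hA : Real.log (p x / q x) > L + c / 2
      · rw [if_pos hA, mul_pow, Real.sq_sqrt (hp0 x)]
      · rw [if_neg hA]
        simpa using mul_nonneg (sq_nonneg (φ x)) (hp0 x)
    have hg2 : (∑ x, (if Real.log (p x / q x) > L + c / 2 then Real.sqrt (p x) else 0) ^ 2)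
        = Tt := by
      rw [hTdef]
      refine Finset.sum_congr rfl fun x _ => ?_
      by_cases hA : Real.log (p x / q x) > L + c / 2
      · rw [if_pos hA, if_pos hA, Real.sq_sqrt (hp0 x)]
      · rw [if_neg hA, if_neg hA]; simp
    rw [hfg, hg2] at hCS
    have hTt0 : 0 ≤ Tt := by
      rw [hTdef]
      refine Finset.sum_nonneg fun x _ => ?_
      split
      · exact hp0 x
      · exact le_refl 0
    have hT1sq : T1 ^ 2 ≤ S2 * Tt := le_trans hCS (mul_le_mul_of_nonneg_right hf2 hTt0)
    calc T1 = Real.sqrt (T1 ^ 2) := (Real.sqrt_sq hT1_0).symm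
      _ ≤ Real.sqrt (S2 * Tt) := Real.sqrt_le_sqrt hT1sq
      _ = Real.sqrt S2 * Real.sqrt Tt := Real.sqrt_mul hS2_0 _
  have hV2 : (∑ x, q x * h x ^ 2) ≤ Real.exp (L + c / 2) * S2 := by
    rw [hS2def, Finset.mul_sum]
    refine Finset.sum_le_sum fun x _ => ?_
    have hrhs0 : (0 : ℝ) ≤ Real.exp (L + c / 2) * (φ x ^ 2 * p x) :=
      mul_nonneg (Real.exp_pos _).le (mul_nonneg (sq_nonneg _) (hp0 x))
    by_cases hA : Real.log (p x / q x) > L + c / 2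
    · have hh : h x = 0 := by simp [hhdef, hA]
      rw [hh]; simpa using hrhs0
    · have hh : h x = f x := by simp [hhdef, hA]
      rcases eq_or_lt_of_le (hq0 x) with hq | hq
      · rw [hh, ← hq]; simpa using hrhs0
      · rcases eq_or_lt_of_le (hp0 x) with hp | hp
        · have hfx : f x = 0 := by simp only [hfdef]; rw [← hp]; ring_nf
          rw [hh, hfx]; simpa using hrhs0
        · have hratio : p x / q x ≤ Real.exp (L + c / 2) := by
            have h1 : Real.exp (Real.log (p x / q x)) = p x / q x :=
              Real.exp_log (div_pos hp hq)
            calc p x / q x = Real.exp (Real.log (p x / q x)) := h1.symm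
              _ ≤ Real.exp (L + c / 2) := Real.exp_le_exp.mpr (not_lt.mp hA)
          have heq : q x * h x ^ 2 = φ x ^ 2 * p x * (p x / q x) := by
            rw [hh]; simp only [hfdef]; field_simp
          rw [heq]
          calc φ x ^ 2 * p x * (p x / q x)
              ≤ φ x ^ 2 * p x * Real.exp (L + c / 2) :=
                mul_le_mul_of_nonneg_left hratio (mul_nonneg (sq_nonneg _) (hp0 x))
            _ = Real.exp (L + c / 2) * (φ x ^ 2 * p x) := by ring
  -- Ω-side machinery
  have hmg : ∀ (g : X → ℝ) (i : Fin n), Measurable fun ω => g (Xs i ω) :=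
    fun g i => (measurable_of_countable g).comp (hmeas i)
  have hig : ∀ (g : X → ℝ) (i : Fin n), Integrable (fun ω => g (Xs i ω)) μ :=
    fun g i => integrable_of_bounded' (hmg g i).aestronglyMeasurable (∑ x, |g x|)
      (fun ω => abs_le_sum_abs' g (Xs i ω))
  have hEg : ∀ (g : X → ℝ) (i : Fin n), ∫ ω, g (Xs i ω) ∂μ = ∑ x, q x * g x :=
    fun g i => integral_comp_law' μ (hmeas i) hq0 (hlaw i) g
  have higprod : ∀ (g g' : X → ℝ) (i j : Fin n),
      Integrable (fun ω => g (Xs i ω) * g' (Xs j ω)) μ := by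
    intro g g' i j
    refine integrable_of_bounded' ((hmg g i).mul (hmg g' j)).aestronglyMeasurable
      ((∑ x, |g x|) * (∑ x, |g' x|)) fun ω => ?_
    rw [abs_mul]
    exact mul_le_mul (abs_le_sum_abs' g _) (abs_le_sum_abs' g' _) (abs_nonneg _)
      (Finset.sum_nonneg fun x _ => abs_nonneg _)
  have hEprod : ∀ (g g' : X → ℝ) (i j : Fin n), i ≠ j →
      ∫ ω, g (Xs i ω) * g' (Xs j ω) ∂μ = (∑ x, q x * g x) * (∑ x, q x * g' x) := by
    intro g g' i j hij
    have hind : IndepFun (g ∘ Xs i) (g' ∘ Xs j) μ :=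
      (hindep.indepFun hij).comp (measurable_of_countable g) (measurable_of_countable g')
    have heq : (fun ω => g (Xs i ω) * g' (Xs j ω)) = (g ∘ Xs i) * (g' ∘ Xs j) := rfl
    rw [heq, hind.integral_mul_eq_mul_integral (hmg g i).aestronglyMeasurable (hmg g' j).aestronglyMeasurable]
    have h1 : (g ∘ Xs i) = fun ω => g (Xs i ω) := rfl
    have h2 : (g' ∘ Xs j) = fun ω => g' (Xs j ω) := rfl
    rw [h1, h2, hEg g i, hEg g' j]
  -- the random variables
  set r : Ω → ℝ := fun ω => (1 / (n : ℝ)) * ∑ i, f (Xs i ω) with hrdef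
  set r1 : Ω → ℝ := fun ω => (1 / (n : ℝ)) * ∑ i, h (Xs i ω) with hr1def
  set W : Ω → ℝ := fun ω => r1 ω - m1 with hWdef
  set g0 : X → ℝ := fun x => h x - m1 with hg0def
  have hint_r : Integrable r μ :=
    (integrable_finset_sum Finset.univ fun i _ => hig f i).const_mul _
  have hint_r1 : Integrable r1 μ :=
    (integrable_finset_sum Finset.univ fun i _ => hig h i).const_mul _
  have hint_W : Integrable W μ := hint_r1.sub (integrable_const m1)
  -- variance computation
  have hm0 : (∑ x, q x * g0 x) = 0 := by
    simp only [hg0def]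
    have : ∀ x, q x * (h x - m1) = q x * h x - m1 * q x := fun x => by ring
    simp_rw [this]
    rw [Finset.sum_sub_distrib, ← Finset.mul_sum, hq1, ← hm1def]
    ring
  set V0 : ℝ := ∑ x, q x * (g0 x * g0 x) with hV0def
  have hV0le : V0 ≤ ∑ x, q x * h x ^ 2 := by
    rw [hV0def]
    have hexp : ∀ x, q x * (g0 x * g0 x)
        = q x * h x ^ 2 - 2 * m1 * (q x * h x) + m1 ^ 2 * q x := by
      intro x; simp only [hg0def]; ring
    simp_rw [hexp]
    rw [Finset.sum_add_distrib, Finset.sum_sub_distrib, ← Finset.mul_sum, ← Finset.mul_sum,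
      hq1, ← hm1def]
    nlinarith [sq_nonneg m1]
  have hWsq : ∀ ω, W ω ^ 2
      = (1 / (n : ℝ)) ^ 2 * ∑ i, ∑ j, g0 (Xs i ω) * g0 (Xs j ω) := by
    intro ω
    have hWeq : W ω = (1 / (n : ℝ)) * ∑ i, g0 (Xs i ω) := by
      simp only [hWdef, hr1def, hg0def]
      rw [Finset.sum_sub_distrib, Finset.sum_const, Finset.card_univ, Fintype.card_fin,
        nsmul_eq_mul]
      field_simp
    rw [hWeq, mul_pow]
    congr 1
    rw [pow_two, Finset.sum_mul_sum]
  have hEprod_eval : ∀ i j : Fin n, ∫ ω, g0 (Xs i ω) * g0 (Xs j ω) ∂μ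
      = if i = j then V0 else 0 := by
    intro i j
    by_cases hij : i = j
    · subst hij
      rw [if_pos rfl, hV0def]
      have heq : (fun ω => g0 (Xs i ω) * g0 (Xs i ω))
          = fun ω => (fun x => g0 x * g0 x) (Xs i ω) := rfl
      rw [heq, hEg (fun x => g0 x * g0 x) i]
    · rw [if_neg hij, hEprod g0 g0 i j hij, hm0, mul_zero]
  have hintW2eq : ∫ ω, W ω ^ 2 ∂μ = (1 / (n : ℝ)) ^ 2 * ((n : ℝ) * V0) := by
    have h1 : ∫ ω, W ω ^ 2 ∂μ
        = (1 / (n : ℝ)) ^ 2 * ∫ ω, (∑ i, ∑ j, g0 (Xs i ω) * g0 (Xs j ω)) ∂μ := by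
      simp_rw [hWsq]
      rw [integral_const_mul]
    rw [h1, integral_finset_sum Finset.univ
      (fun i _ => integrable_finset_sum Finset.univ fun j _ => higprod g0 g0 i j)]
    congr 1
    have h2 : ∀ i : Fin n, ∫ ω, (∑ j, g0 (Xs i ω) * g0 (Xs j ω)) ∂μ = V0 := by
      intro i
      rw [integral_finset_sum Finset.univ fun j _ => higprod g0 g0 i j]
      have h3 : ∀ j : Fin n, j ∈ Finset.univ →
          ∫ ω, g0 (Xs i ω) * g0 (Xs j ω) ∂μ = if i = j then V0 else 0 :=
        fun j _ => hEprod_eval i j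
      rw [Finset.sum_congr rfl h3, Finset.sum_ite_eq Finset.univ i fun _ => V0]
      simp
    rw [Finset.sum_congr rfl fun i _ => h2 i, Finset.sum_const, Finset.card_univ,
      Fintype.card_fin, nsmul_eq_mul]
  have hint_W2 : Integrable (fun ω => W ω ^ 2) μ := by
    have : (fun ω => W ω ^ 2)
        = fun ω => (1 / (n : ℝ)) ^ 2 * ∑ i, ∑ j, g0 (Xs i ω) * g0 (Xs j ω) := by
      funext ω; exact hWsq ω
    rw [this]
    exact (integrable_finset_sum Finset.univ fun i _ =>
      integrable_finset_sum Finset.univ fun j _ => higprod g0 g0 i j).const_mul _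
  -- bound on E|W|
  have hW2bound : ∫ ω, W ω ^ 2 ∂μ ≤ Real.exp (-c / 2) * S2 := by
    rw [hintW2eq]
    have hstep1 : (1 / (n : ℝ)) ^ 2 * ((n : ℝ) * V0) = V0 / n := by
      field_simp
    rw [hstep1]
    have hV0V2 : V0 ≤ Real.exp (L + c / 2) * S2 := le_trans hV0le hV2
    have hkey : Real.exp (L + c / 2) ≤ (n : ℝ) * Real.exp (-c / 2) := by
      have h1 : Real.exp (L + c / 2) = Real.exp (L + c) * Real.exp (-c / 2) := by
        rw [← Real.exp_add]; ring_nf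
      rw [h1]
      exact mul_le_mul_of_nonneg_right hn (Real.exp_pos _).le
    rw [div_le_iff₀ hnpos]
    calc V0 ≤ Real.exp (L + c / 2) * S2 := hV0V2
      _ ≤ ((n : ℝ) * Real.exp (-c / 2)) * S2 := mul_le_mul_of_nonneg_right hkey hS2_0
      _ = Real.exp (-c / 2) * S2 * n := by ring
  have hWle : ∫ ω, |W ω| ∂μ ≤ Real.exp (-c / 4) * Real.sqrt S2 := by
    calc ∫ ω, |W ω| ∂μ ≤ Real.sqrt (∫ ω, W ω ^ 2 ∂μ) :=
          integral_abs_le_sqrt' hint_W hint_W2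
      _ ≤ Real.sqrt (Real.exp (-c / 2) * S2) := Real.sqrt_le_sqrt hW2bound
      _ = Real.exp (-c / 4) * Real.sqrt S2 := by
          rw [Real.sqrt_mul (Real.exp_pos _).le]
          congr 1
          have : Real.exp (-c / 2) = Real.exp (-c / 4) ^ 2 := by
            rw [sq, ← Real.exp_add]; ring_nf
          rw [this, Real.sqrt_sq (Real.exp_pos _).le]
  -- expectation of the tail part
  have hD : ∫ ω, (r ω - r1 ω) ∂μ = T1 := by
    have heq : ∀ ω, r ω - r1 ω = (1 / (n : ℝ)) * ∑ i, (fun x => f x - h x) (Xs i ω) := by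
      intro ω
      simp only [hrdef, hr1def]
      rw [← mul_sub, ← Finset.sum_sub_distrib]
    simp_rw [heq]
    rw [integral_const_mul,
      integral_finset_sum Finset.univ (fun i _ => hig (fun x => f x - h x) i)]
    have h4 : ∀ i : Fin n, i ∈ Finset.univ →
        ∫ ω, (f (Xs i ω) - h (Xs i ω)) ∂μ = T1 := by
      intro i _
      have h5 := hEg (fun x => f x - h x) i
      rw [h5, hT1def]
      exact Finset.sum_congr rfl fun x _ => hqfh x
    rw [Finset.sum_congr rfl h4, Finset.sum_const, Finset.card_univ, Fintype.card_fin,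
      nsmul_eq_mul]
    field_simp
  have hint_sub : Integrable (fun ω => r ω - r1 ω) μ := hint_r.sub hint_r1
  have hint_tail : Integrable (fun ω => (r ω - r1 ω) + T1) μ :=
    hint_sub.add (integrable_const T1)
  have hint_absW : Integrable (fun ω => |W ω|) μ := hint_W.abs
  have hint_rhs : Integrable (fun ω => |W ω| + ((r ω - r1 ω) + T1)) μ :=
    hint_absW.add hint_tail
  -- pointwise bound
  have hpt : ∀ ω, |r ω - rstar| ≤ |W ω| + ((r ω - r1 ω) + T1) := by
    intro ω
    have hge : r1 ω ≤ r ω := by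
      simp only [hrdef, hr1def]
      exact mul_le_mul_of_nonneg_left
        (Finset.sum_le_sum fun i _ => hhf (Xs i ω)) (by positivity)
    have habs2 : |(r ω - r1 ω) - T1| ≤ (r ω - r1 ω) + T1 := by
      rw [abs_sub_comm]
      calc |T1 - (r ω - r1 ω)| ≤ |T1| + |r ω - r1 ω| := abs_sub _ _
        _ = T1 + (r ω - r1 ω) := by
            rw [abs_of_nonneg hT1_0, abs_of_nonneg (by linarith)]
        _ = (r ω - r1 ω) + T1 := by ring
    calc |r ω - rstar| = |W ω + ((r ω - r1 ω) - T1)| := by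
          congr 1
          simp only [hWdef]
          rw [hsplit]; ring
      _ ≤ |W ω| + |(r ω - r1 ω) - T1| := abs_add_le _ _
      _ ≤ |W ω| + ((r ω - r1 ω) + T1) := by linarith
  -- final assembly
  have hrw : (fun ω => |(1 / (n : ℝ)) * ∑ i, φ (Xs i ω) * p (Xs i ω) / q (Xs i ω) - rstar|)
      = fun ω => |r ω - rstar| := rfl
  calc ∫ ω, |(1 / (n : ℝ)) * ∑ i, φ (Xs i ω) * p (Xs i ω) / q (Xs i ω) - rstar| ∂μ
      = ∫ ω, |r ω - rstar| ∂μ := by rw [hrw]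
    _ ≤ ∫ ω, (|W ω| + ((r ω - r1 ω) + T1)) ∂μ := by
        exact integral_mono (hint_r.sub (integrable_const rstar)).abs hint_rhs hpt
    _ = (∫ ω, |W ω| ∂μ) + ((∫ ω, (r ω - r1 ω) ∂μ) + T1) := by
        rw [integral_add hint_absW hint_tail, integral_add hint_sub (integrable_const T1),
          integral_const]
        simp
    _ = (∫ ω, |W ω| ∂μ) + 2 * T1 := by rw [hD]; ring
    _ ≤ Real.exp (-c / 4) * Real.sqrt S2 + 2 * (Real.sqrt S2 * Real.sqrt Tt) := by
        linarith [hWle, hT1M]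
    _ = Real.sqrt S2 * (Real.exp (-c / 4) + 2 * Real.sqrt Tt) := by ring
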